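/- arXiv:1406.2052 — 2 statements merged into one kernel-verified Lean document; each statement's English description precedes it below -/
import Mathlib

section
/- Let Q be a locally point symmetric convex polytope in ℝ^D, let v₁ and v₂ be a pair of strictly antipodal vertices of Q, and let E₁ and E₂ be parallel edges of Q with v₁ ∈ E₁ and v₂ ∈ E₂. Then there exist parallel supporting hyperplanes H₁ and H₂ of Q such that H₁ ∩ Q = E₁ and H₂ ∩ Q = E₂. -/
open scoped Pointwise

noncomputable section

/-- Points of `ℝ^D` with the Euclidean metric. -/
abbrev Pt (D : ℕ) := EuclideanSpace ℝ (Fin D)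

/-- `L(S)`: the set of lattice points of `S`, i.e. points of `S` all of whose
coordinates are integers. -/
def latticePts {D : ℕ} (S : Set (Pt D)) : Set (Pt D) :=
  {x | x ∈ S ∧ ∀ i, ∃ z : ℤ, x i = (z : ℝ)}

/-- A convex polytope: the convex hull of a finite set of points. -/
def IsPolytope {D : ℕ} (P : Set (Pt D)) : Prop :=
  ∃ V : Set (Pt D), V.Finite ∧ P = convexHull ℝ V

/-- A convex polytope whose vertices (extreme points) all lie in `ℤ^D`. -/
def IsLatticePolytope {D : ℕ} (P : Set (Pt D)) : Prop :=
  IsPolytope P ∧ ∀ v ∈ Set.extremePoints ℝ P, ∀ i, ∃ z : ℤ, v i = (z : ℝ)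

/-- `u` and `v` are strictly antipodal vertices of `Q`: there are parallel supporting
hyperplanes `H₁, H₂` of `Q` (with common normal functional `f`) such that
`H₁ ∩ Q = {u}` and `H₂ ∩ Q = {v}`. -/
def StrictlyAntipodal {D : ℕ} (Q : Set (Pt D)) (u v : Pt D) : Prop :=
  ∃ f : Pt D →ₗ[ℝ] ℝ, f ≠ 0 ∧
    {x | x ∈ Q ∧ ∀ y ∈ Q, f y ≤ f x} = {u} ∧
    {x | x ∈ Q ∧ ∀ y ∈ Q, f x ≤ f y} = {v}

/-- The supporting cone of `Q` at `v`: `v + ⋃_{λ ≥ 0} λ (Q - v)`. -/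
def suppCone {D : ℕ} (Q : Set (Pt D)) (v : Pt D) : Set (Pt D) :=
  {v} + ⋃ (l : ℝ) (_ : 0 ≤ l), l • (Q - ({v} : Set (Pt D)))

/-- `Q` is locally point symmetric: its vertices can be partitioned into pairs
(given by a fixed-point-free involution `σ` of the vertex set) of strictly antipodal
vertices such that each pair `{u, v}` satisfies `C(u) - u = v - C(v)`. -/
def LocallyPointSymmetric {D : ℕ} (Q : Set (Pt D)) : Prop :=
  ∃ σ : Pt D → Pt D, ∀ v ∈ Set.extremePoints ℝ Q,
    σ v ∈ Set.extremePoints ℝ Q ∧ σ v ≠ v ∧ σ (σ v) = v ∧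
    StrictlyAntipodal Q v (σ v) ∧
    suppCone Q v - ({v} : Set (Pt D)) = ({σ v} : Set (Pt D)) - suppCone Q (σ v)

/-- `E` is an edge of `Q`: a 1-dimensional face, i.e. the intersection of `Q` with a
supporting hyperplane which is 1-dimensional. -/
def IsEdge {D : ℕ} (Q E : Set (Pt D)) : Prop :=
  (∃ f : Pt D →ₗ[ℝ] ℝ, f ≠ 0 ∧ E = {x | x ∈ Q ∧ ∀ y ∈ Q, f y ≤ f x}) ∧
    Module.finrank ℝ (affineSpan ℝ E).direction = 1

/-- `B_r(Q)`: lattice points of `Q` within distance `r` of some vertex of `Q`. -/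
def ballFringe {D : ℕ} (Q : Set (Pt D)) (r : ℝ) : Set (Pt D) :=
  {q | q ∈ latticePts Q ∧ ∃ v ∈ Set.extremePoints ℝ Q, dist q v ≤ r}

/-- `M_r(Q) = L(Q) \ B_r(Q)`: the middle lattice points of `Q`. -/
def middlePts {D : ℕ} (Q : Set (Pt D)) (r : ℝ) : Set (Pt D) :=
  latticePts Q \ ballFringe Q r

/-- `P` is point symmetric: `P = x - P` for some point `x`. -/
def PointSymmetric {D : ℕ} (P : Set (Pt D)) : Prop :=
  ∃ x : Pt D, P = ({x} : Set (Pt D)) - P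

lemma mem_suppCone {D : ℕ} {Q : Set (Pt D)} {v x : Pt D} :
    x ∈ suppCone Q v ↔ ∃ l : ℝ, 0 ≤ l ∧ ∃ q ∈ Q, x = v + l • (q - v) := by
  simp only [suppCone, Set.singleton_add, Set.image_add_left, Set.mem_preimage,
    Set.mem_iUnion, Set.mem_smul_set, Set.sub_singleton, Set.mem_image]
  constructor
  · rintro ⟨l, hl, ⟨y, ⟨q, hq, rfl⟩, hy⟩⟩
    refine ⟨l, hl, q, hq, ?_⟩; rw [hy]; abel
  · rintro ⟨l, hl, q, hq, rfl⟩
    exact ⟨l, hl, ⟨q - v, ⟨q, hq, rfl⟩, by abel⟩⟩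

lemma subset_suppCone {D : ℕ} {Q : Set (Pt D)} {v : Pt D} : Q ⊆ suppCone Q v := by
  intro q hq
  exact mem_suppCone.mpr ⟨1, zero_le_one, q, hq, by simp⟩

lemma direction_le_ker {D : ℕ} {Q E : Set (Pt D)} {f : Pt D →ₗ[ℝ] ℝ}
    (hE : E = {x | x ∈ Q ∧ ∀ y ∈ Q, f y ≤ f x}) :
    (affineSpan ℝ E).direction ≤ LinearMap.ker f := by
  rw [direction_affineSpan, vectorSpan_def, Submodule.span_le]
  rintro w ⟨a, ha, b, hb, rfl⟩
  rw [hE] at ha hb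
  simp only [SetLike.mem_coe, LinearMap.mem_ker, vsub_eq_sub, map_sub]
  have h1 : f a ≤ f b := hb.2 a ha.1
  have h2 : f b ≤ f a := ha.2 b hb.1
  linarith

/-- Let `Q` be a locally point symmetric convex polytope, `v₁, v₂` a
pair of strictly antipodal vertices, and `E₁, E₂` parallel edges with `v₁ ∈ E₁` and
`v₂ ∈ E₂`. Then there exist parallel supporting hyperplanes `H₁, H₂` of `Q` (with common
normal functional `f`) such that `H₁ ∩ Q = E₁` and `H₂ ∩ Q = E₂`. -/
theorem stmt8 {D : ℕ} (Q : Set (Pt D)) (hQ : IsPolytope Q)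
    (hlps : LocallyPointSymmetric Q)
    (v₁ v₂ : Pt D) (hv₁ : v₁ ∈ Set.extremePoints ℝ Q) (hv₂ : v₂ ∈ Set.extremePoints ℝ Q)
    (hanti : StrictlyAntipodal Q v₁ v₂)
    (E₁ E₂ : Set (Pt D)) (hE₁ : IsEdge Q E₁) (hE₂ : IsEdge Q E₂)
    (hpar : (affineSpan ℝ E₁).direction = (affineSpan ℝ E₂).direction)
    (hv₁E : v₁ ∈ E₁) (hv₂E : v₂ ∈ E₂) :
    ∃ f : Pt D →ₗ[ℝ] ℝ, f ≠ 0 ∧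
      {x | x ∈ Q ∧ ∀ y ∈ Q, f x ≤ f y} = E₁ ∧
      {x | x ∈ Q ∧ ∀ y ∈ Q, f y ≤ f x} = E₂ := by
  obtain ⟨⟨f₁, hf₁ne, hE₁eq⟩, _⟩ := hE₁
  obtain ⟨⟨f₂, hf₂ne, hE₂eq⟩, _⟩ := hE₂
  obtain ⟨f₀, hf₀ne, hmax, hmin⟩ := hanti
  obtain ⟨σ, hσ⟩ := hlps
  have hv₁Q : v₁ ∈ Q := hv₁.1
  have hv₁mem : v₁ ∈ {x | x ∈ Q ∧ ∀ y ∈ Q, f₀ y ≤ f₀ x} := by rw [hmax]; rfl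
  have hf₀max : ∀ y ∈ Q, f₀ y ≤ f₀ v₁ := hv₁mem.2
  obtain ⟨hσext, -, -, -, hc⟩ := hσ v₁ hv₁
  have hσQ : σ v₁ ∈ Q := hσext.1
  -- Step 1 : σ v₁ = v₂
  have hσmin : ∀ y ∈ Q, f₀ (σ v₁) ≤ f₀ y := by
    intro y hy
    have h1 : σ v₁ - y ∈ ({σ v₁} : Set (Pt D)) - suppCone Q (σ v₁) :=
      Set.sub_mem_sub rfl (subset_suppCone hy)
    rw [← hc] at h1
    obtain ⟨c, hcmem, v, hv, hcv⟩ := h1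
    obtain ⟨l, hl, q, hq, rfl⟩ := mem_suppCone.mp hcmem
    rw [Set.mem_singleton_iff] at hv
    rw [hv] at hcv
    have he : σ v₁ - y = l • (q - v₁) := by rw [← hcv]; module
    have := congrArg f₀ he
    simp only [map_sub, map_smul, smul_eq_mul] at this
    nlinarith [hf₀max q hq]
  have hσeq : σ v₁ = v₂ := by
    have h2 : σ v₁ ∈ {x | x ∈ Q ∧ ∀ y ∈ Q, f₀ x ≤ f₀ y} := ⟨hσQ, hσmin⟩
    rwa [hmin, Set.mem_singleton_iff] at h2
  rw [hσeq] at hc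
  -- v₂ is the max of f₂, v₁ is the max of f₁
  have hv₂E' : v₂ ∈ Q ∧ ∀ y ∈ Q, f₂ y ≤ f₂ v₂ := by rwa [hE₂eq] at hv₂E
  have hv₁E' : v₁ ∈ Q ∧ ∀ y ∈ Q, f₁ y ≤ f₁ v₁ := by rwa [hE₁eq] at hv₁E
  -- Step 2 : key minimality property of f₂ at v₁
  have hkey : ∀ x ∈ Q, f₂ v₁ ≤ f₂ x ∧
      (f₂ x ≤ f₂ v₁ → x - v₁ ∈ (affineSpan ℝ E₂).direction) := by
    intro x hx
    have h1 : x - v₁ ∈ suppCone Q v₁ - ({v₁} : Set (Pt D)) :=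
      Set.sub_mem_sub (subset_suppCone hx) rfl
    rw [hc] at h1
    obtain ⟨a, ha, c, hcmem, hac⟩ := h1
    rw [Set.mem_singleton_iff] at ha
    rw [ha] at hac
    obtain ⟨l, hl, q, hq, rfl⟩ := mem_suppCone.mp hcmem
    have he : x - v₁ = (-l) • (q - v₂) := by rw [← hac]; module
    have hfe : f₂ x - f₂ v₁ = l * (f₂ v₂ - f₂ q) := by
      have := congrArg f₂ he
      simp only [map_sub, map_smul, smul_eq_mul] at this
      linarith
    have hq2 : f₂ q ≤ f₂ v₂ := hv₂E'.2 q hq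
    constructor
    · nlinarith
    · intro hle
      have hz : l * (f₂ v₂ - f₂ q) = 0 := le_antisymm (by linarith) (mul_nonneg hl (by linarith))
      rcases mul_eq_zero.mp hz with h | h
      · rw [he, h]; simp
      · have hqE : q ∈ E₂ := by
          rw [hE₂eq]
          exact ⟨hq, fun y hy => le_trans (hv₂E'.2 y hy) (by linarith)⟩
        have hd : q - v₂ ∈ (affineSpan ℝ E₂).direction :=
          AffineSubspace.vsub_mem_direction (subset_affineSpan ℝ E₂ hqE)
            (subset_affineSpan ℝ E₂ hv₂E)
        rw [he]
        exact Submodule.smul_mem _ _ hd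
  refine ⟨f₂, hf₂ne, ?_, hE₂eq.symm⟩
  ext x
  simp only [Set.mem_setOf_eq]
  constructor
  · rintro ⟨hxQ, hxmin⟩
    have h1 : x - v₁ ∈ (affineSpan ℝ E₁).direction := by
      rw [hpar]
      exact (hkey x hxQ).2 (hxmin v₁ hv₁Q)
    have hf₁0 : f₁ (x - v₁) = 0 := direction_le_ker hE₁eq h1
    rw [map_sub, sub_eq_zero] at hf₁0
    rw [hE₁eq]
    exact ⟨hxQ, fun y hy => (hv₁E'.2 y hy).trans_eq hf₁0.symm⟩
  · intro hxE
    have hxQ : x ∈ Q := by rw [hE₁eq] at hxE; exact hxE.1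
    have hd : x - v₁ ∈ (affineSpan ℝ E₂).direction := by
      rw [← hpar]
      exact AffineSubspace.vsub_mem_direction (subset_affineSpan ℝ E₁ hxE)
        (subset_affineSpan ℝ E₁ hv₁E)
    have h0 : f₂ (x - v₁) = 0 := direction_le_ker hE₂eq hd
    rw [map_sub, sub_eq_zero] at h0
    refine ⟨hxQ, fun y hy => ?_⟩
    have := (hkey y hy).1
    linarith
end
end

section
/- Let P be a convex polytope in ℝ^D with vertices in ℤ^D and let a > 0 be a constant. Then there exists a constant t > 0 such that for all n ≥ 2, every point k ∈ L(nP + nP) with |L(nP ∩ (k − nP))| ≤ a · log n lies within Euclidean distance t · log n of some vertex of the polytope nP + nP. -/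
open scoped Pointwise

noncomputable section

def IsZ {D : ℕ} (x : Pt D) : Prop := ∀ i, ∃ z : ℤ, x i = (z : ℝ)

lemma isZ_add {D : ℕ} {x y : Pt D} (hx : IsZ x) (hy : IsZ y) : IsZ (x + y) := by
  intro i
  obtain ⟨z, hz⟩ := hx i; obtain ⟨w, hw⟩ := hy i
  exact ⟨z + w, by simp [hz, hw]⟩

lemma isZ_zsmul {D : ℕ} {x : Pt D} (hx : IsZ x) (c : ℤ) : IsZ ((c : ℝ) • x) := by
  intro i
  obtain ⟨z, hz⟩ := hx i
  exact ⟨c * z, by simp [hz]⟩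

lemma isZ_sub {D : ℕ} {x y : Pt D} (hx : IsZ x) (hy : IsZ y) : IsZ (x - y) := by
  have := isZ_add hx (isZ_zsmul hy (-1))
  simpa [sub_eq_add_neg] using this

lemma isZ_sum {D : ℕ} {ι : Type*} (s : Finset ι) (f : ι → Pt D) (h : ∀ i ∈ s, IsZ (f i)) :
    IsZ (∑ i ∈ s, f i) := by
  classical
  induction s using Finset.induction_on with
  | empty => intro i; exact ⟨0, by simp⟩
  | insert a s hni ih =>
      rw [Finset.sum_insert hni]
      exact isZ_add (h a (Finset.mem_insert_self a s))
        (ih fun i hi => h i (Finset.mem_insert_of_mem hi))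

lemma coord_abs_le_norm {D : ℕ} (x : Pt D) (i : Fin D) : |x i| ≤ ‖x‖ := by
  rw [EuclideanSpace.norm_eq]
  calc |x i| = Real.sqrt (‖x i‖ ^ 2) := by rw [Real.sqrt_sq_eq_abs]; simp
    _ ≤ _ := Real.sqrt_le_sqrt (Finset.single_le_sum (f := fun j => ‖x j‖ ^ 2)
        (fun j _ => by positivity) (Finset.mem_univ i))

lemma isZ_finite {D : ℕ} (R : ℝ) : {x : Pt D | IsZ x ∧ ‖x‖ ≤ R}.Finite := by
  classical
  have hfin : ({f : Fin D → ℤ | ∀ i, f i ∈ Finset.Icc (-⌈R⌉) ⌈R⌉} : Set (Fin D → ℤ)).Finite := by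
    have := Set.Finite.pi (fun i : Fin D => (Finset.Icc (-⌈R⌉) ⌈R⌉ : Finset ℤ).finite_toSet)
    refine this.subset ?_
    intro f hf
    simp only [Set.mem_pi, Set.mem_univ, forall_true_left]
    intro i
    exact hf i
  apply (hfin.image (fun f : Fin D → ℤ => (WithLp.toLp 2 (fun i => (f i : ℝ)) : Pt D))).subset
  rintro x ⟨hZ, hR⟩
  refine ⟨fun i => (hZ i).choose, fun i => ?_, ?_⟩
  · have hx := (hZ i).choose_spec
    have h1 : |x i| ≤ R := le_trans (coord_abs_le_norm x i) hR
    rw [hx] at h1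
    have : |((hZ i).choose : ℝ)| ≤ (⌈R⌉ : ℝ) := le_trans h1 (Int.le_ceil R)
    rw [← Int.cast_abs, Int.cast_le] at this
    simp [Finset.mem_Icc, abs_le.mp this]
  · ext i; exact ((hZ i).choose_spec).symm

lemma smul_mem_extremePoints {D : ℕ} {s : Set (Pt D)} {x : Pt D} {c : ℝ} (hc : 0 < c)
    (hx : x ∈ Set.extremePoints ℝ s) : c • x ∈ Set.extremePoints ℝ (c • s) := by
  rw [mem_extremePoints] at hx ⊢
  obtain ⟨hxs, hseg⟩ := hx
  refine ⟨Set.smul_mem_smul_set hxs, ?_⟩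
  rintro x₁ hx₁ x₂ hx₂ hmem
  obtain ⟨y₁, hy₁, rfl⟩ := hx₁
  obtain ⟨y₂, hy₂, rfl⟩ := hx₂
  obtain ⟨p, b, hp, hb, hab, habx⟩ := hmem
  have : x ∈ openSegment ℝ y₁ y₂ := by
    refine ⟨p, b, hp, hb, hab, ?_⟩
    have hcc : c • (p • y₁ + b • y₂) = c • x := by
      rw [← habx]; simp [smul_add, smul_comm c p, smul_comm c b]
    exact smul_right_injective (Pt D) hc.ne' hcc
  obtain ⟨h1, h2⟩ := hseg y₁ hy₁ y₂ hy₂ this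
  rw [h1, h2]
  exact ⟨rfl, rfl⟩

lemma sum_split {α M : Type*} [AddCommMonoid M] [DecidableEq α] (s : Finset α) {v₁ v₂ : α}
    (h1 : v₁ ∈ s) (h2 : v₂ ∈ s.erase v₁) (f : α → M) :
    ∑ v ∈ s, f v = f v₁ + (f v₂ + ∑ v ∈ (s.erase v₁).erase v₂, f v) := by
  rw [← Finset.add_sum_erase _ f h1, ← Finset.add_sum_erase _ f h2]

set_option maxHeartbeats 4000000 in
lemma core {D : ℕ} (Wf : Finset (Pt D)) (hne : Wf.Nonempty) (hZ : ∀ v ∈ Wf, IsZ v)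
    (R : ℝ) (hR : ∀ v ∈ Wf, ‖v‖ ≤ R)
    (n : ℕ) (hn : 2 ≤ n) (k : Pt D) (hkZ : IsZ k)
    (hk : k ∈ (2 * (n : ℝ)) • (convexHull ℝ (Wf : Set (Pt D))))
    (L : ℝ) (hL : 0 ≤ L)
    (hcount : ((latticePts ((n : ℝ) • (convexHull ℝ (Wf : Set (Pt D))) ∩
        (({k} : Set (Pt D)) - (n : ℝ) • (convexHull ℝ (Wf : Set (Pt D)))))).ncard : ℝ) ≤ L) :
    ∃ v₁ ∈ Wf, dist k ((2 * (n : ℝ)) • v₁) ≤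
      4 * R * Wf.card * (L + Wf.card + 4) := by

  classical
  set N : ℝ := (n : ℝ) with hNdef
  have hN0 : (0 : ℝ) < N := by
    rw [hNdef]
    exact_mod_cast (by omega : 0 < n)
  have hN2 : (2 : ℝ) ≤ N := by
    rw [hNdef]
    exact_mod_cast hn
  have hR0 : 0 ≤ R := le_trans (norm_nonneg _) (hR _ hne.choose_spec)
  set P : Set (Pt D) := convexHull ℝ (Wf : Set (Pt D)) with hPdef
  set m : ℕ := Wf.card with hmdef
  have hm1 : 1 ≤ m := Finset.card_pos.mpr hne
  -- bound on points of P
  have hPball : ∀ x ∈ P, ‖x‖ ≤ R := by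
    intro x hx
    have hsub : P ⊆ Metric.closedBall (0 : Pt D) R := by
      rw [hPdef]
      refine convexHull_min ?_ (convex_closedBall 0 R)
      intro v hv
      rw [Metric.mem_closedBall, dist_zero_right]
      exact hR v hv
    have := hsub hx
    rwa [Metric.mem_closedBall, dist_zero_right] at this
  -- decompose k
  obtain ⟨y, hyP, hky⟩ := Set.mem_smul_set.mp hk
  rw [Finset.mem_convexHull] at hyP
  obtain ⟨lam, hlam0, hlam1, hycm⟩ := hyP
  have hy : ∑ v ∈ Wf, lam v • v = y := by
    rw [← hycm, Finset.centerMass_eq_of_sum_1 _ _ hlam1]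
    simp
  -- choose v₁
  obtain ⟨v₁, hv₁W, hmax₁⟩ := Finset.exists_max_image Wf lam hne
  refine ⟨v₁, hv₁W, ?_⟩
  have hml : (1 : ℝ) ≤ (m : ℝ) * lam v₁ := by
    have := Finset.sum_le_card_nsmul Wf lam (lam v₁) (fun v hv => hmax₁ v hv)
    rw [hlam1, nsmul_eq_mul] at this
    exact this
  have hlam₁0 : 0 ≤ lam v₁ := hlam0 v₁ hv₁W
  have hlam₁1 : lam v₁ ≤ 1 := by
    have h := Finset.single_le_sum (f := lam) (fun v hv => hlam0 v hv) hv₁W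
    rw [hlam1] at h; exact h
  -- distance formula
  have hdist : dist k ((2 * N) • v₁) = (2 * N) * ‖y - v₁‖ := by
    rw [← hky, dist_eq_norm, ← smul_sub, norm_smul]
    congr 1
    rw [Real.norm_eq_abs, abs_of_pos (by linarith)]
  -- handle m = 1
  rcases eq_or_lt_of_le hm1 with hm1' | hm2
  · -- m = 1 : Wf = {v₁}
    have hWf : Wf = {v₁} := by
      apply Finset.eq_singleton_iff_unique_mem.mpr
      refine ⟨hv₁W, fun x hx => ?_⟩
      by_contra hxx
      have : 2 ≤ Wf.card := Finset.one_lt_card.mpr ⟨x, hx, v₁, hv₁W, hxx⟩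
      omega
    have hyv : y = v₁ := by
      have : y ∈ P := by
        rw [← hycm]
        exact Finset.centerMass_mem_convexHull Wf hlam0 (by rw [hlam1]; norm_num)
          (fun v hv => Finset.mem_coe.mpr hv)
      rw [hPdef, hWf] at this
      simpa [convexHull_singleton] using this
    rw [hdist, hyv, sub_self, norm_zero, mul_zero]
    have : (1:ℝ) ≤ (m:ℝ) := by exact_mod_cast hm1
    positivity
  -- main case : m ≥ 2
  have hm2' : (2 : ℝ) ≤ (m : ℝ) := by exact_mod_cast hm2
  have herne : (Wf.erase v₁).Nonempty := by
    rw [← Finset.card_pos, Finset.card_erase_of_mem hv₁W]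
    omega
  obtain ⟨v₂, hv₂E, hmax₂⟩ := Finset.exists_max_image (Wf.erase v₁) lam herne
  have hv₂ne : v₂ ≠ v₁ := (Finset.mem_erase.mp hv₂E).1
  have hv₂W : v₂ ∈ Wf := (Finset.mem_erase.mp hv₂E).2
  have hlam₂0 : 0 ≤ lam v₂ := hlam0 v₂ hv₂W
  have herase_sum : ∑ v ∈ Wf.erase v₁, lam v = 1 - lam v₁ := by
    rw [Finset.sum_erase_eq_sub hv₁W, hlam1]
  have h1ml : 1 - lam v₁ ≤ ((m : ℝ) - 1) * lam v₂ := by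
    have := Finset.sum_le_card_nsmul (Wf.erase v₁) lam (lam v₂) (fun v hv => hmax₂ v hv)
    rw [herase_sum, nsmul_eq_mul, Finset.card_erase_of_mem hv₁W] at this
    have hc : (((m - 1 : ℕ)) : ℝ) = (m : ℝ) - 1 := by
      have : 1 ≤ m := hm1
      push_cast [this]
      ring
    rwa [hc] at this
  set E : Finset (Pt D) := (Wf.erase v₁).erase v₂ with hEdef
  have hEfact : ∀ v ∈ E, v ∈ Wf ∧ v ≠ v₁ ∧ v ≠ v₂ := by
    intro v hv
    have h1 := Finset.mem_erase.mp hv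
    have h2 := Finset.mem_erase.mp h1.2
    exact ⟨h2.2, h2.1, h1.1⟩
  set lam₁ : ℝ := lam v₁
  set lam₂ : ℝ := lam v₂
  set mu : ℝ := ∑ v ∈ E, lam v with hmudef
  have hmu : mu = 1 - lam₁ - lam₂ := by
    have := sum_split Wf hv₁W hv₂E lam
    rw [hlam1] at this
    rw [hmudef]; linarith [this]
  have hmu0 : 0 ≤ mu := Finset.sum_nonneg (fun v hv => hlam0 v (hEfact v hv).1)
  set jv : Pt D → ℤ := fun v => ⌊N * lam v⌋ with hjvdef
  set T : ℤ := ∑ v ∈ E, jv v with hTdef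
  have hjv0 : ∀ v ∈ E, (0 : ℤ) ≤ jv v := by
    intro v hv
    exact Int.floor_nonneg.mpr (mul_nonneg hN0.le (hlam0 v (hEfact v hv).1))
  have hT0 : (0 : ℤ) ≤ T := Finset.sum_nonneg hjv0
  have hEcard : ((E.card : ℝ)) ≤ (m : ℝ) := by
    have h1 : E ⊆ Wf := fun v hv => (hEfact v hv).1
    exact_mod_cast Finset.card_le_card h1
  have hT_le : (T : ℝ) ≤ N * mu := by
    have : ((T : ℤ) : ℝ) = ∑ v ∈ E, ((jv v : ℤ) : ℝ) := by
      rw [hTdef]; push_cast; ring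
    rw [this, hmudef, Finset.mul_sum]
    exact Finset.sum_le_sum (fun v hv => Int.floor_le (N * lam v))
  have hT_ge : N * mu - (m : ℝ) ≤ (T : ℝ) := by
    have h1 : ((T : ℤ) : ℝ) = ∑ v ∈ E, ((jv v : ℤ) : ℝ) := by
      rw [hTdef]; push_cast; ring
    have h2 : ∑ v ∈ E, (N * lam v - 1) ≤ ∑ v ∈ E, ((jv v : ℤ) : ℝ) :=
      Finset.sum_le_sum (fun v hv => (Int.sub_one_lt_floor (N * lam v)).le)
    have h3 : ∑ v ∈ E, (N * lam v - 1) = N * mu - E.card := by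
      rw [Finset.sum_sub_distrib, hmudef, Finset.mul_sum]
      simp
    rw [h1]
    rw [h3] at h2
    linarith
  -- the interval
  set A' : ℤ := max 0 (⌈N * (1 - 2 * lam₁)⌉ - T) with hA'def
  set B' : ℤ := min ⌊2 * N * lam₂⌋ ((n : ℤ) - T) with hB'def
  -- the candidate lattice points
  set S1 : Pt D := ∑ v ∈ E, ((jv v : ℝ)) • v with hS1def
  set xf : ℤ → Pt D := fun j => N • v₁ + (j : ℝ) • (v₂ - v₁) + (S1 - (T : ℝ) • v₁) with hxfdef
  -- membership in the convex hull from weights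
  have hmemNP : ∀ (x : Pt D) (w : Pt D → ℝ), (∀ v ∈ Wf, 0 ≤ w v) → (∑ v ∈ Wf, w v = 1) →
      (N⁻¹ • x = ∑ v ∈ Wf, w v • v) → x ∈ N • P := by
    intro x w h0 h1 hx
    have hmem : ∑ v ∈ Wf, w v • v ∈ P := by
      have := Finset.centerMass_mem_convexHull Wf h0 (by rw [h1]; norm_num)
        (fun v hv => Finset.mem_coe.mpr hv)
      rw [Finset.centerMass_eq_of_sum_1 _ _ h1] at this
      simpa using this
    rw [← hx] at hmem
    have := Set.smul_mem_smul_set (a := N) hmem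
    rwa [smul_inv_smul₀ hN0.ne'] at this
  -- main claim : each xf j with j in the range is a lattice point of the intersection
  have hmain : ∀ j ∈ Finset.Icc A' B',
      xf j ∈ latticePts (N • P ∩ (({k} : Set (Pt D)) - N • P)) := by
    intro j hj
    rw [Finset.mem_Icc] at hj
    obtain ⟨hjA, hjB⟩ := hj
    have hj0 : (0 : ℤ) ≤ j := le_trans (le_max_left _ _) hjA
    have hj0R : (0 : ℝ) ≤ (j : ℝ) := by exact_mod_cast hj0
    have hjTn : (j : ℝ) + (T : ℝ) ≤ N := by
      have h1 : j ≤ (n : ℤ) - T := le_trans hjB (min_le_right _ _)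
      have h2 : j + T ≤ (n : ℤ) := by omega
      have h3 : ((j + T : ℤ) : ℝ) ≤ ((n : ℤ) : ℝ) := by exact_mod_cast h2
      push_cast at h3
      rw [hNdef]
      exact h3
    have hjlow : N * (1 - 2 * lam₁) ≤ (j : ℝ) + (T : ℝ) := by
      have h1 : ⌈N * (1 - 2 * lam₁)⌉ - T ≤ j := le_trans (le_max_right _ _) hjA
      have h2 : ⌈N * (1 - 2 * lam₁)⌉ ≤ j + T := by omega
      have h3 := Int.ceil_le.mp h2
      push_cast at h3
      exact h3
    have hjup : (j : ℝ) ≤ 2 * N * lam₂ := by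
      have h1 : j ≤ ⌊2 * N * lam₂⌋ := le_trans hjB (min_le_left _ _)
      exact_mod_cast Int.le_floor.mp h1
    -- first weight system
    set w1 : Pt D → ℝ := fun v => if v = v₁ then 1 - ((j : ℝ) + (T : ℝ)) / N
      else if v = v₂ then (j : ℝ) / N else ((jv v : ℝ)) / N with hw1def
    have hw1v₁ : w1 v₁ = 1 - ((j : ℝ) + (T : ℝ)) / N := by simp [hw1def]
    have hw1v₂ : w1 v₂ = (j : ℝ) / N := by simp only [hw1def]; simp [hv₂ne]
    have hw1E : ∀ v ∈ E, w1 v = ((jv v : ℝ)) / N := by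
      intro v hv
      simp only [hw1def]
      simp [(hEfact v hv).2.1, (hEfact v hv).2.2]
    have hTsum : ((T : ℝ)) = ∑ v ∈ E, ((jv v : ℝ)) := by
      rw [hTdef]; push_cast; ring
    have hw1sum : ∑ v ∈ Wf, w1 v = 1 := by
      rw [sum_split Wf hv₁W hv₂E w1, hw1v₁, hw1v₂, Finset.sum_congr rfl hw1E,
        ← Finset.sum_div, ← hTsum]
      field_simp
      ring
    have hw1vec : N⁻¹ • (xf j) = ∑ v ∈ Wf, w1 v • v := by
      rw [sum_split Wf hv₁W hv₂E (fun v => w1 v • v), hw1v₁, hw1v₂,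
        Finset.sum_congr rfl (fun v hv => by rw [hw1E v hv]),
        show (∑ v ∈ E, (((jv v : ℝ)) / N) • v) = N⁻¹ • S1 from by
          rw [hS1def, Finset.smul_sum]
          exact Finset.sum_congr rfl (fun v hv => by rw [smul_smul]; congr 1; field_simp)]
      rw [hxfdef]
      match_scalars <;> field_simp <;> ring
    have hw10 : ∀ v ∈ Wf, 0 ≤ w1 v := by
      intro v hv
      simp only [hw1def]
      by_cases h1 : v = v₁
      · rw [if_pos h1]
        rw [sub_nonneg, div_le_one hN0]
        exact hjTn
      · rw [if_neg h1]
        by_cases h2 : v = v₂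
        · rw [if_pos h2]
          positivity
        · rw [if_neg h2]
          have : (0 : ℤ) ≤ jv v := Int.floor_nonneg.mpr (mul_nonneg hN0.le (hlam0 v hv))
          have : (0 : ℝ) ≤ ((jv v : ℝ)) := by exact_mod_cast this
          positivity
    have hmem1 : xf j ∈ N • P := hmemNP (xf j) w1 hw10 hw1sum hw1vec
    -- second weight system
    set w2 : Pt D → ℝ := fun v => 2 * lam v - w1 v with hw2def
    have hw2sum : ∑ v ∈ Wf, w2 v = 1 := by
      simp only [hw2def]
      rw [Finset.sum_sub_distrib, ← Finset.mul_sum, hlam1, hw1sum]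
      norm_num
    have hw2vec : N⁻¹ • (k - xf j) = ∑ v ∈ Wf, w2 v • v := by
      have h2y : ∑ v ∈ Wf, (2 * lam v) • v = (2 : ℝ) • y := by
        rw [← hy, Finset.smul_sum]
        exact Finset.sum_congr rfl (fun v hv => by rw [smul_smul])
      have hky' : N⁻¹ • k = (2 : ℝ) • y := by
        rw [← hky, smul_smul]
        congr 1
        field_simp
      simp only [hw2def]
      simp only [sub_smul]
      rw [Finset.sum_sub_distrib, h2y, smul_sub, hky', hw1vec]
    have hw20 : ∀ v ∈ Wf, 0 ≤ w2 v := by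
      intro v hv
      simp only [hw2def, hw1def]
      by_cases h1 : v = v₁
      · rw [if_pos h1, h1]
        have h : 1 - 2 * lam₁ ≤ ((j : ℝ) + (T : ℝ)) / N :=
          (le_div_iff₀ hN0).mpr (by nlinarith [hjlow])
        linarith
      · rw [if_neg h1]
        by_cases h2 : v = v₂
        · rw [if_pos h2, h2]
          have h : (j : ℝ) / N ≤ 2 * lam₂ :=
            (div_le_iff₀ hN0).mpr (by nlinarith [hjup])
          linarith
        · rw [if_neg h2]
          have hfl : ((jv v : ℝ)) ≤ N * lam v := Int.floor_le _
          have h : ((jv v : ℝ)) / N ≤ 2 * lam v :=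
            (div_le_iff₀ hN0).mpr (by nlinarith [hlam0 v hv, hN0.le, hfl])
          linarith
    have hmem2 : k - xf j ∈ N • P := hmemNP (k - xf j) w2 hw20 hw2sum hw2vec
    -- lattice point
    have hxZ : IsZ (xf j) := by
      rw [hxfdef]
      have hNv₁ : IsZ (N • v₁) := by
        have := isZ_zsmul (hZ v₁ hv₁W) (n : ℤ)
        have hcast : (((n : ℤ) : ℝ)) • v₁ = N • v₁ := by
          rw [hNdef]; norm_num
        rwa [hcast] at this
      refine isZ_add (isZ_add hNv₁ (isZ_zsmul (isZ_sub (hZ v₂ hv₂W) (hZ v₁ hv₁W)) j)) ?_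
      refine isZ_sub ?_ (isZ_zsmul (hZ v₁ hv₁W) T)
      rw [hS1def]
      exact isZ_sum E _ (fun v hv => isZ_zsmul (hZ v (hEfact v hv).1) (jv v))
    refine ⟨⟨hmem1, ?_⟩, hxZ⟩
    rw [Set.mem_sub]
    exact ⟨k, Set.mem_singleton _, k - xf j, hmem2, by abel⟩
    -- injectivity
  have hinj : Set.InjOn xf ↑(Finset.Icc A' B') := by
    intro j _ j' _ h
    simp only [hxfdef] at h
    have h' : (j : ℝ) • (v₂ - v₁) = (j' : ℝ) • (v₂ - v₁) :=
      add_left_cancel (add_right_cancel h)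
    have hd : ((j : ℝ) - (j' : ℝ)) • (v₂ - v₁) = 0 := by
      rw [sub_smul, h', sub_self]
    rcases smul_eq_zero.mp hd with h0 | h0
    · have : (j : ℝ) = (j' : ℝ) := by linarith [sub_eq_zero.mp h0]
      exact_mod_cast this
    · exact absurd (sub_eq_zero.mp h0) hv₂ne
  -- finiteness of the lattice points of the intersection
  have hfinL : (latticePts (N • P ∩ (({k} : Set (Pt D)) - N • P))).Finite := by
    apply (isZ_finite (N * R)).subset
    rintro x ⟨⟨hx1, _⟩, hxZ⟩
    refine ⟨hxZ, ?_⟩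
    obtain ⟨p, hp, rfl⟩ := Set.mem_smul_set.mp hx1
    rw [norm_smul, Real.norm_eq_abs, abs_of_pos hN0]
    exact mul_le_mul_of_nonneg_left (hPball p hp) hN0.le
  -- cardinality chain
  have hcard : ((Finset.Icc A' B').card : ℝ) ≤ L := by
    have h1 : (xf '' ↑(Finset.Icc A' B')).ncard = (Finset.Icc A' B').card := by
      rw [Set.ncard_image_of_injOn hinj, Set.ncard_coe_finset]
    have h2 : (xf '' ↑(Finset.Icc A' B')).ncard ≤
        (latticePts (N • P ∩ (({k} : Set (Pt D)) - N • P))).ncard := by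
      refine Set.ncard_le_ncard ?_ hfinL
      rintro x ⟨jj, hjj, rfl⟩
      exact hmain jj (by exact_mod_cast hjj)
    have h3 : ((Finset.Icc A' B').card : ℝ) ≤
        ((latticePts (N • P ∩ (({k} : Set (Pt D)) - N • P))).ncard : ℝ) := by
      rw [← h1]; exact_mod_cast h2
    exact le_trans h3 hcount
  have hBA : (B' : ℝ) - (A' : ℝ) ≤ L + 1 := by
    rcases le_or_gt A' B' with hAB | hAB
    · have hc : (Finset.Icc A' B').card = (B' + 1 - A').toNat := Int.card_Icc A' B'
      have h4 : ((B' + 1 - A').toNat : ℝ) ≤ L := by rw [← hc]; exact hcard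
      have h5 : ((B' + 1 - A' : ℤ).toNat : ℤ) = B' + 1 - A' :=
        Int.toNat_of_nonneg (by omega)
      have h6 : ((B' + 1 - A' : ℤ).toNat : ℝ) = (B' : ℝ) + 1 - (A' : ℝ) := by
        exact_mod_cast congrArg (Int.cast : ℤ → ℝ) h5
      rw [h6] at h4
      linarith
    · have : (B' : ℝ) + 1 ≤ (A' : ℝ) := by exact_mod_cast hAB
      linarith
  -- key estimate
  have hA'cast : (A' : ℝ) = max 0 ((⌈N * (1 - 2 * lam₁)⌉ : ℝ) - (T : ℝ)) := by
    rw [hA'def]; push_cast; rfl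
  have hB'cast : (B' : ℝ) = min ((⌊2 * N * lam₂⌋ : ℝ)) (N - (T : ℝ)) := by
    rw [hB'def]; push_cast; rw [hNdef]
  have hm0 : (0 : ℝ) ≤ (m : ℝ) := by positivity
  have hKEY : min (2 * N * lam₂) (N * lam₁) ≤ (B' : ℝ) - (A' : ℝ) + (m : ℝ) + 2 := by
    have hceil := Int.ceil_lt_add_one (N * (1 - 2 * lam₁))
    have hfloor := Int.sub_one_lt_floor (2 * N * lam₂)
    have hNl2 : 0 ≤ N * lam₂ := mul_nonneg hN0.le hlam₂0
    have hNl1 : 0 ≤ N * lam₁ := mul_nonneg hN0.le hlam₁0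
    have hmin1 : min (2 * N * lam₂) (N * lam₁) ≤ 2 * N * lam₂ := min_le_left _ _
    have hmin2 : min (2 * N * lam₂) (N * lam₁) ≤ N * lam₁ := min_le_right _ _
    have hexp : N * mu = N - N * lam₁ - N * lam₂ := by rw [hmu]; ring
    have hexp2 : N * (1 - 2 * lam₁) = N - 2 * (N * lam₁) := by ring
    rw [hA'cast, hB'cast]
    rcases max_cases (0 : ℝ) ((⌈N * (1 - 2 * lam₁)⌉ : ℝ) - (T : ℝ)) with ⟨h1, h2⟩ | ⟨h1, h2⟩ <;>
      rcases min_cases ((⌊2 * N * lam₂⌋ : ℝ)) (N - (T : ℝ)) with ⟨h3, h4⟩ | ⟨h3, h4⟩ <;>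
      rw [h1, h3] <;>
      linarith [hmin1, hmin2, hceil, hfloor, hT_le, hT_ge, hNl1, hNl2, hexp, hexp2, hm0]
  have hminL : min (2 * N * lam₂) (N * lam₁) ≤ L + (m : ℝ) + 3 := by linarith
  -- norm estimate
  have hydiff : y - v₁ = ∑ v ∈ Wf, lam v • (v - v₁) := by
    simp only [smul_sub]
    rw [Finset.sum_sub_distrib, hy, ← Finset.sum_smul, hlam1, one_smul]
  have hn1 : ‖y - v₁‖ ≤ ∑ v ∈ Wf, lam v * ‖v - v₁‖ := by
    rw [hydiff]
    refine le_trans (norm_sum_le _ _) (le_of_eq (Finset.sum_congr rfl fun v hv => ?_))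
    rw [norm_smul, Real.norm_eq_abs, abs_of_nonneg (hlam0 v hv)]
  have hsum2 : ∑ v ∈ Wf.erase v₁, lam v * ‖v - v₁‖ = ∑ v ∈ Wf, lam v * ‖v - v₁‖ := by
    rw [Finset.sum_erase_eq_sub hv₁W]
    simp
  have hsum3 : ∑ v ∈ Wf.erase v₁, lam v * ‖v - v₁‖ ≤ 2 * R * (1 - lam₁) := by
    have hstep : ∑ v ∈ Wf.erase v₁, lam v * ‖v - v₁‖ ≤ ∑ v ∈ Wf.erase v₁, lam v * (2 * R) := by
      refine Finset.sum_le_sum fun v hv => ?_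
      have hvW : v ∈ Wf := Finset.mem_of_mem_erase hv
      have hnv : ‖v - v₁‖ ≤ 2 * R := by
        have := norm_sub_le v v₁
        have h5 := hR v hvW
        have h6 := hR v₁ hv₁W
        linarith
      exact mul_le_mul_of_nonneg_left hnv (hlam0 v hvW)
    rw [← Finset.sum_mul, herase_sum] at hstep
    linarith
  have hyv1 : ‖y - v₁‖ ≤ 2 * R * (1 - lam₁) := by
    rw [← hsum2] at hn1
    linarith
  -- conclusion
  rw [hdist]
  have hnn : 0 ≤ ‖y - v₁‖ := norm_nonneg _
  rcases min_le_iff.mp hminL with hcase | hcase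
  · -- 2 N lam₂ ≤ L + m + 3
    have hb1 : 2 * N * ‖y - v₁‖ ≤ 2 * N * (2 * R * (1 - lam₁)) := by
      apply mul_le_mul_of_nonneg_left hyv1 (by linarith)
    have hb2 : 2 * N * (2 * R * (1 - lam₁)) ≤ 2 * R * ((m : ℝ) - 1) * (2 * N * lam₂) := by
      have := mul_le_mul_of_nonneg_left h1ml (mul_nonneg hR0 hN0.le)
      nlinarith [this]
    have hb3 : 2 * R * ((m : ℝ) - 1) * (2 * N * lam₂) ≤ 2 * R * ((m : ℝ) - 1) * (L + m + 3) := by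
      apply mul_le_mul_of_nonneg_left hcase
      have h7 : (0 : ℝ) ≤ (m : ℝ) - 1 := by linarith
      exact mul_nonneg (by positivity) h7
    have hb4 : 2 * R * ((m : ℝ) - 1) * (L + m + 3) ≤ 4 * R * (m : ℝ) * (L + m + 4) := by
      nlinarith [hR0, hL, hm0, hm2']
    linarith
  · -- N lam₁ ≤ L + m + 3
    have hNbound : N ≤ (m : ℝ) * (L + m + 3) := by
      have h5 : N * 1 ≤ N * ((m : ℝ) * lam₁) := mul_le_mul_of_nonneg_left hml hN0.le
      have h6 : (m : ℝ) * (N * lam₁) ≤ (m : ℝ) * (L + m + 3) :=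
        mul_le_mul_of_nonneg_left hcase hm0
      nlinarith [h5, h6]
    have hb1 : 2 * N * ‖y - v₁‖ ≤ 4 * N * R := by
      have : ‖y - v₁‖ ≤ 2 * R := by nlinarith [hyv1, hR0, hlam₁0]
      nlinarith [hN0.le]
    have hb2 : 4 * N * R ≤ 4 * R * (m : ℝ) * (L + m + 4) := by
      nlinarith [hR0, hNbound, hL, hm0]
    linarith

set_option maxHeartbeats 1000000 in
/-- For a lattice polytope `P` and a constant `a > 0`, there is `t > 0`
such that for all `n ≥ 2`, every `k ∈ L(nP + nP)` with `|L(nP ∩ (k - nP))| ≤ a log n`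
lies within distance `t log n` of some vertex of `nP + nP`. -/
theorem stmt13 {D : ℕ} (P : Set (Pt D)) (hP : IsLatticePolytope P) (a : ℝ) (ha : 0 < a) :
    ∃ t : ℝ, 0 < t ∧ ∀ n : ℕ, 2 ≤ n →
      ∀ k ∈ latticePts ((n : ℝ) • P + (n : ℝ) • P),
        ((latticePts ((n : ℝ) • P ∩ (({k} : Set (Pt D)) - (n : ℝ) • P))).ncard : ℝ)
            ≤ a * Real.log n →
        ∃ v ∈ Set.extremePoints ℝ ((n : ℝ) • P + (n : ℝ) • P),
          dist k v ≤ t * Real.log n := by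
  classical
  obtain ⟨⟨V₀, hV₀fin, hPV₀⟩, hPZ⟩ := hP
  rcases Set.eq_empty_or_nonempty P with hPe | hPne
  · refine ⟨1, one_pos, fun n hn k hk _ => ?_⟩
    exfalso
    have := hk.1
    rw [hPe] at this
    simp at this
  · have hPc : IsCompact P := hPV₀ ▸ hV₀fin.isCompact_convexHull ℝ
    have hconv : Convex ℝ P := hPV₀ ▸ convex_convexHull ℝ V₀
    set W : Set (Pt D) := Set.extremePoints ℝ P with hWdef
    have hWsub : W ⊆ V₀ := by
      rw [hWdef, hPV₀]
      exact extremePoints_convexHull_subset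
    have hWfin : W.Finite := hV₀fin.subset hWsub
    have hPW : P = convexHull ℝ W := by
      have h1 := closure_convexHull_extremePoints hPc hconv
      have h2 : IsClosed (convexHull ℝ W) := (hWfin.isCompact_convexHull ℝ).isClosed
      rw [← h1, h2.closure_eq]
    set Wf : Finset (Pt D) := hWfin.toFinset with hWfdef
    have hWfc : (Wf : Set (Pt D)) = W := Set.Finite.coe_toFinset _
    have hPWf : P = convexHull ℝ (Wf : Set (Pt D)) := by rw [hWfc, ← hPW]
    have hne : Wf.Nonempty := by
      rw [Finset.nonempty_iff_ne_empty]
      intro h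
      rw [h] at hPWf
      simp [convexHull_empty] at hPWf
      exact hPne.ne_empty hPWf
    have hZv : ∀ v ∈ Wf, IsZ v := by
      intro v hv
      exact hPZ v (hWfc ▸ Finset.mem_coe.mpr hv)
    set R : ℝ := Wf.sup' hne (fun v => ‖v‖) with hRdef
    have hRb : ∀ v ∈ Wf, ‖v‖ ≤ R := fun v hv => Finset.le_sup' _ hv
    have hR0 : 0 ≤ R := le_trans (norm_nonneg _) (hRb _ hne.choose_spec)
    set m : ℕ := Wf.card with hmdef
    have hm0 : (0 : ℝ) ≤ (m : ℝ) := Nat.cast_nonneg _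
    have hlog2 : 0 < Real.log 2 := Real.log_pos (by norm_num)
    set C : ℝ := 4 * R * (m : ℝ) with hCdef
    have hC0 : 0 ≤ C := by rw [hCdef]; exact mul_nonneg (mul_nonneg (by norm_num) hR0) hm0
    refine ⟨C * a + C * ((m : ℝ) + 4) / Real.log 2 + 1, ?_, ?_⟩
    · have h1 : 0 ≤ C * a := mul_nonneg hC0 ha.le
      have h2 : 0 ≤ C * ((m : ℝ) + 4) / Real.log 2 :=
        div_nonneg (mul_nonneg hC0 (by linarith)) hlog2.le
      linarith
    · intro n hn k hk hcnt
      have hn0 : (0 : ℝ) < (n : ℝ) := by exact_mod_cast (by omega : 0 < n)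
      have hlogn : Real.log 2 ≤ Real.log n :=
        Real.log_le_log (by norm_num) (by exact_mod_cast hn)
      have hlogn0 : 0 < Real.log n := lt_of_lt_of_le hlog2 hlogn
      have hQ : (n : ℝ) • P + (n : ℝ) • P = (2 * (n : ℝ)) • P := by
        have h := hconv.add_smul hn0.le hn0.le
        have h2 : (2 * (n : ℝ)) = (n : ℝ) + (n : ℝ) := by ring
        rw [h2, h]
      obtain ⟨hk1, hkZ⟩ := hk
      rw [hQ, hPWf] at hk1
      rw [hPWf] at hcnt
      set L : ℝ := a * Real.log n with hLdef
      have hL : 0 ≤ L := by rw [hLdef]; positivity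
      obtain ⟨v₁, hv₁, hdist⟩ := core Wf hne hZv R hRb n hn k hkZ hk1 L hL hcnt
      refine ⟨(2 * (n : ℝ)) • v₁, ?_, ?_⟩
      · rw [hQ]
        apply smul_mem_extremePoints (by positivity)
        have : v₁ ∈ W := hWfc ▸ Finset.mem_coe.mpr hv₁
        rw [hWdef] at this
        exact this
      · refine le_trans hdist ?_
        have h1 : C * ((m : ℝ) + 4) = (C * ((m : ℝ) + 4) / Real.log 2) * Real.log 2 :=
          (div_mul_cancel₀ _ hlog2.ne').symm
        have h2 : (C * ((m : ℝ) + 4) / Real.log 2) * Real.log 2 ≤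
            (C * ((m : ℝ) + 4) / Real.log 2) * Real.log n :=
          mul_le_mul_of_nonneg_left hlogn
            (div_nonneg (mul_nonneg hC0 (by linarith)) hlog2.le)
        have hexpand : 4 * R * (m : ℝ) * (L + (m : ℝ) + 4) =
            C * a * Real.log n + C * ((m : ℝ) + 4) := by
          rw [hCdef, hLdef]; ring
        rw [hexpand]
        have h3 : (C * a + C * ((m : ℝ) + 4) / Real.log 2 + 1) * Real.log n =
            C * a * Real.log n + (C * ((m : ℝ) + 4) / Real.log 2) * Real.log n
              + Real.log n := by ring
        rw [h3]
        linarith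
end
end
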